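/- Fix an integer T ≥ 1, p ∈ (0,1], a point x ∈ ℝ^T, and let z be a Bernoulli(p) random variable. Define the random vector ĝ(x) ∈ ℝ^T coordinatewise by [ĝ(x)]_j = ∂_j f̂_T(x) · (1 + 1{j > prog(x)} (z/p − 1)). Then E[ĝ(x)] = ∇ f̂_T(x), and E‖ĝ(x) − ∇ f̂_T(x)‖₂² = |∂_{prog(x)+1} f̂_T(x)|² · (1 − p)/p ≤ 23² (1 − p)/p (where the middle term is interpreted as 0 if prog(x) = T). -/

import Mathlib

/-- Ψ(z) = 0 for z ≤ 1/2 and Ψ(z) = exp(1 − 1/(2z−1)²) for z > 1/2. -/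
noncomputable def Psi (z : ℝ) : ℝ :=
  if z ≤ 1/2 then 0 else Real.exp (1 - 1/(2*z - 1)^2)

/-- Φ(z) = √e ∫_{−∞}^{z} exp(−t²/2) dt. -/
noncomputable def Phi (z : ℝ) : ℝ :=
  Real.sqrt (Real.exp 1) * ∫ t in Set.Iic z, Real.exp (-t^2/2)

/-- The 1-based `i`-th coordinate of `x` (junk value 0 out of range): `coord x i = x_{i+1}`
in 0-based terms. -/
noncomputable def coord {T : ℕ} (x : EuclideanSpace ℝ (Fin T)) (i : ℕ) : ℝ :=
  if h : i < T then x ⟨i, h⟩ else 0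

/-- f̂_T(x) = −Ψ(1)Φ(x₁) + Σ_{i=1}^{T−1} [Ψ(−x_i)Φ(−x_{i+1}) − Ψ(x_i)Φ(x_{i+1})],
where the 1-based coordinate x_i is `coord x (i-1)`. -/
noncomputable def fhat (T : ℕ) (x : EuclideanSpace ℝ (Fin T)) : ℝ :=
  -(Psi 1) * Phi (coord x 0) +
    ∑ i ∈ Finset.Ico 1 T,
      (Psi (-(coord x (i-1))) * Phi (-(coord x i)) - Psi (coord x (i-1)) * Phi (coord x i))

open scoped Classical in
/-- prog(x) = max{i ≥ 1 : x_i ≠ 0} (1-based), and 0 if x = 0. -/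
noncomputable def prog {T : ℕ} (x : EuclideanSpace ℝ (Fin T)) : ℕ :=
  (Finset.univ.filter fun i : Fin T => x i ≠ 0).sup fun i => (i : ℕ) + 1


open MeasureTheory


lemma psi_of_nonpos {z : ℝ} (h : z ≤ 1/2) : Psi z = 0 := if_pos h

lemma psi_nonneg (z : ℝ) : 0 ≤ Psi z := by
  rw [Psi]; split
  · exact le_rfl
  · exact (Real.exp_pos _).le

lemma psi_le (z : ℝ) : Psi z ≤ Real.exp 1 := by
  rw [Psi]; split
  · exact (Real.exp_pos _).le
  · apply Real.exp_le_exp.mpr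
    rename_i h
    have h2 : (0:ℝ) < 2*z - 1 := by push_neg at h; linarith
    have : 0 < 1/(2*z-1)^2 := by positivity
    linarith

lemma gauss_integrable : Integrable (fun t : ℝ => Real.exp (-t^2/2)) := by
  have := integrable_exp_neg_mul_sq (by norm_num : (0:ℝ) < 1/2)
  convert this using 2 with t
  ring_nf

lemma phi_hasDerivAt (z : ℝ) :
    HasDerivAt Phi (Real.sqrt (Real.exp 1) * Real.exp (-z^2/2)) z := by
  have hcont : Continuous fun t : ℝ => Real.exp (-t^2/2) := by continuity
  have key : Phi = fun w => Real.sqrt (Real.exp 1) *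
      ((∫ t in Set.Iic (0:ℝ), Real.exp (-t^2/2)) + ∫ t in (0:ℝ)..w, Real.exp (-t^2/2)) := by
    funext w
    rw [Phi]
    congr 1
    have := intervalIntegral.integral_Iic_sub_Iic
      (gauss_integrable.integrableOn (s := Set.Iic (0:ℝ)))
      (gauss_integrable.integrableOn (s := Set.Iic w))
    linarith
  rw [key]
  exact (((hcont.integral_hasStrictDerivAt 0 z).hasDerivAt.const_add _).const_mul _)

lemma coord_eq_zero {T : ℕ} (x : EuclideanSpace ℝ (Fin T)) (m : ℕ) (hm : prog x ≤ m) :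
    coord x m = 0 := by
  classical
  rw [coord]; split
  · rename_i h
    by_contra hne
    have hmem : (⟨m, h⟩ : Fin T) ∈ Finset.univ.filter (fun i : Fin T => x i ≠ 0) := by
      simp only [Finset.mem_filter, Finset.mem_univ, true_and]; exact hne
    have hle : m + 1 ≤ prog x := by
      have := Finset.le_sup (f := fun i : Fin T => (i:ℕ)+1) hmem
      simpa [prog] using this
    omega
  · rfl

lemma coord_update {T : ℕ} (x : EuclideanSpace ℝ (Fin T)) (j : Fin T) (t : ℝ) (m : ℕ) :
    coord (x + t • EuclideanSpace.single j 1) m =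
      coord x m + if m = (j:ℕ) then t else 0 := by
  set y : EuclideanSpace ℝ (Fin T) := x + t • EuclideanSpace.single j 1 with hy
  rw [coord, coord]
  split
  · rename_i h
    have h1 : y ⟨m, h⟩
        = x ⟨m,h⟩ + t * (EuclideanSpace.single j (1:ℝ)) ⟨m,h⟩ := rfl
    rw [h1, EuclideanSpace.single_apply]
    by_cases he : (⟨m, h⟩ : Fin T) = j
    · have : m = (j:ℕ) := by rw [← he]
      simp [he, this]
    · have : m ≠ (j:ℕ) := by
        intro hc; exact he (Fin.ext hc)
      simp [he, this]
  · rename_i h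
    have : m ≠ (j:ℕ) := by have := j.isLt; omega
    simp [this]

lemma fhat_perturb {T : ℕ} (x : EuclideanSpace ℝ (Fin T)) (j : Fin T)
    (hj : prog x ≤ (j:ℕ)) {t : ℝ} (ht : |t| < 1/2)
    {B1 B2 : ℝ}
    (hB : ((j:ℕ) = 0 ∧ B1 = 0 ∧ B2 = Psi 1) ∨
          (1 ≤ (j:ℕ) ∧ B1 = Psi (-(coord x ((j:ℕ)-1))) ∧ B2 = Psi (coord x ((j:ℕ)-1)))) :
    fhat T (x + t • EuclideanSpace.single j 1) =
      fhat T x + ((B1 * Phi (-t) - B2 * Phi t) - (B1 * Phi 0 - B2 * Phi 0)) := by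
  rcases abs_lt.mp ht with ⟨ht1, ht2⟩
  have hpt : Psi t = 0 := psi_of_nonpos (by linarith)
  have hpt' : Psi (-t) = 0 := psi_of_nonpos (by linarith)
  have hp0 : Psi 0 = 0 := psi_of_nonpos (by norm_num)
  set y : EuclideanSpace ℝ (Fin T) := x + t • EuclideanSpace.single j 1 with hy
  have hxJ : coord x (j:ℕ) = 0 := coord_eq_zero x _ hj
  have hcJ : coord y (j:ℕ) = t := by
    rw [hy, coord_update, hxJ]; simp
  have hcne : ∀ m, m ≠ (j:ℕ) → coord y m = coord x m := by
    intro m hm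
    rw [hy, coord_update, if_neg hm, add_zero]
  set D := ((B1 * Phi (-t) - B2 * Phi t) - (B1 * Phi 0 - B2 * Phi 0)) with hD
  rw [fhat, fhat]
  have hsum : ∀ i ∈ Finset.Ico 1 T,
      (Psi (-(coord y (i-1))) * Phi (-(coord y i)) - Psi (coord y (i-1)) * Phi (coord y i))
      = (Psi (-(coord x (i-1))) * Phi (-(coord x i)) - Psi (coord x (i-1)) * Phi (coord x i))
        + (if i = (j:ℕ) then D else 0) := by
    intro i hi
    rw [Finset.mem_Ico] at hi
    by_cases h1 : i = (j:ℕ)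
    · rcases hB with ⟨h0, _, _⟩ | ⟨h0, hB1, hB2⟩
      · omega
      rw [if_pos h1]
      subst h1
      have hi1 : (j:ℕ) - 1 ≠ (j:ℕ) := by omega
      rw [hcJ, hcne ((j:ℕ)-1) hi1, hxJ, hD, ← hB1, ← hB2, neg_zero]
      ring
    · rw [if_neg h1]
      by_cases h2 : i = (j:ℕ) + 1
      · have h3 : i - 1 = (j:ℕ) := by omega
        rw [hcne i h1, h3, hcJ, hxJ, hpt, hpt', neg_zero, hp0]
        ring
      · have h3 : i - 1 ≠ (j:ℕ) := by omega
        rw [hcne i h1, hcne (i-1) h3, add_zero]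
  rw [Finset.sum_congr rfl hsum, Finset.sum_add_distrib,
    Finset.sum_ite_eq' (Finset.Ico 1 T) ((j:ℕ)) (fun _ => D)]
  rcases hB with ⟨h0, hB1, hB2⟩ | ⟨h0, hB1, hB2⟩
  · have hy0 : coord y 0 = t := by rw [← h0]; exact hcJ
    have hx0 : coord x 0 = 0 := by rw [← h0]; exact hxJ
    have hmem : ¬ ((j:ℕ) ∈ Finset.Ico 1 T) := by simp [h0]
    rw [hy0, hx0, if_neg hmem, hD, hB1, hB2]
    ring
  · have hy0 : coord y 0 = coord x 0 := hcne 0 (by omega)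
    have hmem : (j:ℕ) ∈ Finset.Ico 1 T := by
      rw [Finset.mem_Ico]; exact ⟨h0, j.isLt⟩
    rw [hy0, if_pos hmem]
    ring

lemma grad_val {T : ℕ} (x : EuclideanSpace ℝ (Fin T)) (j : Fin T)
    (hj : prog x ≤ (j:ℕ)) (hd : DifferentiableAt ℝ (fhat T) x)
    {B1 B2 : ℝ}
    (hB : ((j:ℕ) = 0 ∧ B1 = 0 ∧ B2 = Psi 1) ∨
          (1 ≤ (j:ℕ) ∧ B1 = Psi (-(coord x ((j:ℕ)-1))) ∧ B2 = Psi (coord x ((j:ℕ)-1)))) :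
    gradient (fhat T) x j = -((B1 + B2) * Real.sqrt (Real.exp 1)) := by
  have hline : HasDerivAt (fun t : ℝ => x + t • EuclideanSpace.single j 1)
      (EuclideanSpace.single j 1) 0 := by
    have h1 : HasDerivAt (fun t : ℝ => t • EuclideanSpace.single j (1:ℝ))
        ((1:ℝ) • EuclideanSpace.single j (1:ℝ)) 0 := (hasDerivAt_id 0).smul_const _
    simpa using h1.const_add x
  have hc0 : (x + (0:ℝ) • EuclideanSpace.single j (1:ℝ)) = x := by simp
  have hcomp : HasDerivAt (fun t : ℝ => fhat T (x + t • EuclideanSpace.single j 1))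
      (fderiv ℝ (fhat T) x (EuclideanSpace.single j 1)) 0 := by
    have hf' : HasFDerivAt (fhat T) (fderiv ℝ (fhat T) x)
        (x + (0:ℝ) • EuclideanSpace.single j (1:ℝ)) := by
      rw [hc0]; exact hd.hasFDerivAt
    have h := hf'.comp_hasDerivAt 0 hline
    exact h
  have hG : HasDerivAt
      (fun t : ℝ => fhat T x + ((B1 * Phi (-t) - B2 * Phi t) - (B1 * Phi 0 - B2 * Phi 0)))
      (-((B1 + B2) * Real.sqrt (Real.exp 1))) 0 := by
    have h1 : HasDerivAt (fun t : ℝ => Phi (-t)) (-(Real.sqrt (Real.exp 1))) 0 := by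
      have := (phi_hasDerivAt (-0 : ℝ)).comp 0 (hasDerivAt_neg (0:ℝ))
      simp at this
      exact this
    have h2 : HasDerivAt Phi (Real.sqrt (Real.exp 1)) 0 := by
      simpa using phi_hasDerivAt 0
    have h3 := (((h1.const_mul B1).sub (h2.const_mul B2)).sub_const
      (B1 * Phi 0 - B2 * Phi 0)).const_add (fhat T x)
    exact h3.congr_deriv (by ring)
  have hEq : (fun t : ℝ => fhat T (x + t • EuclideanSpace.single j 1)) =ᶠ[nhds 0]
      (fun t => fhat T x + ((B1 * Phi (-t) - B2 * Phi t) - (B1 * Phi 0 - B2 * Phi 0))) := by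
    have hb : Metric.ball (0:ℝ) (1/2) ∈ nhds (0:ℝ) := Metric.ball_mem_nhds _ (by norm_num)
    filter_upwards [hb] with t ht
    have : |t| < 1/2 := by simpa [Real.dist_eq] using ht
    exact fhat_perturb x j hj this hB
  have huniq : fderiv ℝ (fhat T) x (EuclideanSpace.single j 1)
      = -((B1+B2) * Real.sqrt (Real.exp 1)) :=
    (hcomp.congr_of_eventuallyEq hEq.symm).unique hG
  have hv : (inner ℝ (gradient (fhat T) x) (EuclideanSpace.single j (1:ℝ)) : ℝ)
      = gradient (fhat T) x j := by
    rw [EuclideanSpace.inner_single_right]; simp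
  rw [← hv]
  show (inner ℝ ((InnerProductSpace.toDual ℝ (EuclideanSpace ℝ (Fin T))).symm
    (fderiv ℝ (fhat T) x)) (EuclideanSpace.single j (1:ℝ)) : ℝ) = _
  rw [InnerProductSpace.toDual_symm_apply]
  exact huniq

lemma grad_zero {T : ℕ} (x : EuclideanSpace ℝ (Fin T)) (j : Fin T)
    (hj : prog x < (j:ℕ)) : gradient (fhat T) x j = 0 := by
  by_cases hd : DifferentiableAt ℝ (fhat T) x
  · have h1 : 1 ≤ (j:ℕ) := by omega
    have hz : coord x ((j:ℕ)-1) = 0 := coord_eq_zero x _ (by omega)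
    have hgv := grad_val x j (le_of_lt hj) hd (Or.inr ⟨h1, rfl, rfl⟩)
    rw [hgv, hz, neg_zero, psi_of_nonpos (by norm_num : (0:ℝ) ≤ 1/2)]
    ring
  · rw [gradient_eq_zero_of_not_differentiableAt hd]
    rfl


/-- The stochastic oracle ĝ(x)_j = ∂_j f̂_T(x)·(1 + 1{j > prog(x)}(z/p − 1)) with z
Bernoulli(p) is unbiased, E[ĝ(x)] = ∇f̂_T(x), and its variance satisfies
E‖ĝ(x) − ∇f̂_T(x)‖² = |∂_{prog(x)+1} f̂_T(x)|²·(1−p)/p ≤ 23²(1−p)/p, where the partial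
derivative is interpreted as 0 if prog(x) = T. -/
theorem oracle_props (T : ℕ) (hT : 1 ≤ T) (p : ℝ) (hp : 0 < p) (hp1 : p ≤ 1)
    {Ω : Type*} [MeasurableSpace Ω] (μ : Measure Ω) [IsProbabilityMeasure μ]
    (z : Ω → ℝ) (hz : ∀ ω, z ω = 0 ∨ z ω = 1) (hmeas : Measurable z)
    (hprob : μ {ω | z ω = 1} = ENNReal.ofReal p)
    (x : EuclideanSpace ℝ (Fin T))
    (ghat : Ω → EuclideanSpace ℝ (Fin T))
    (hghat : ∀ ω (j : Fin T), ghat ω j =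
      gradient (fhat T) x j *
        (1 + (if prog x < (j : ℕ) + 1 then (1 : ℝ) else 0) * (z ω / p - 1))) :
    (∫ ω, ghat ω ∂μ) = gradient (fhat T) x ∧
    (∫ ω, ‖ghat ω - gradient (fhat T) x‖ ^ 2 ∂μ) =
      (if h : prog x < T then gradient (fhat T) x ⟨prog x, h⟩ else 0) ^ 2 * (1 - p) / p ∧
    (if h : prog x < T then gradient (fhat T) x ⟨prog x, h⟩ else 0) ^ 2 * (1 - p) / p ≤
      23 ^ 2 * (1 - p) / p := by
  classical
  set g : EuclideanSpace ℝ (Fin T) := gradient (fhat T) x with hgdef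
  -- the oracle as a shifted representation
  set v : EuclideanSpace ℝ (Fin T) :=
    (WithLp.toLp 2 (fun j : Fin T => (if prog x < (j:ℕ)+1 then (1:ℝ) else 0) * g j) :
      EuclideanSpace ℝ (Fin T)) with hvdef
  have hrepr : ∀ ω, ghat ω = g + (z ω / p - 1) • v := by
    intro ω
    ext jj
    have h1 := hghat ω jj
    have h2 : (g + (z ω / p - 1) • v) jj = g jj + (z ω/p - 1) * v jj := rfl
    have h3 : v jj = (if prog x < (jj:ℕ)+1 then (1:ℝ) else 0) * g jj := rfl
    rw [h1, h2, h3]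
    ring
  have hvs : v = if h : prog x < T then
      EuclideanSpace.single ⟨prog x, h⟩ (g ⟨prog x, h⟩) else 0 := by
    split
    · rename_i h
      ext jj
      have h3 : v jj = (if prog x < (jj:ℕ)+1 then (1:ℝ) else 0) * g jj := rfl
      rw [h3, EuclideanSpace.single_apply]
      by_cases hjj : jj = (⟨prog x, h⟩ : Fin T)
      · subst hjj
        simp
      · rw [if_neg hjj]
        by_cases hlt : prog x < (jj:ℕ)+1
        · have hne : prog x < (jj:ℕ) := by
            rcases Nat.lt_or_ge (prog x) (jj:ℕ) with h'|h'
            · exact h'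
            · exfalso
              apply hjj
              apply Fin.ext
              show (jj:ℕ) = prog x
              omega
          rw [hgdef, grad_zero x jj hne]
          ring
        · rw [if_neg hlt]
          ring
    · rename_i h
      ext jj
      have h3 : v jj = (if prog x < (jj:ℕ)+1 then (1:ℝ) else 0) * g jj := rfl
      have : ¬ prog x < (jj:ℕ)+1 := by have := jj.isLt; omega
      rw [h3, if_neg this]
      simp
  -- integrals of z
  have hsmeas : MeasurableSet {ω | z ω = 1} := by
    have : {ω | z ω = 1} = z ⁻¹' {1} := rfl
    rw [this]
    exact hmeas (measurableSet_singleton 1)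
  have hzind : z = fun ω => Set.indicator {ω | z ω = 1} (fun _ => (1:ℝ)) ω := by
    funext ω
    rcases hz ω with h | h <;> simp [Set.indicator_apply, Set.mem_setOf_eq, h]
  have hint : Integrable z μ := by
    rw [hzind]
    exact (integrable_const (1:ℝ)).indicator hsmeas
  have hEz : ∫ ω, z ω ∂μ = p := by
    conv_lhs => rw [hzind]
    rw [integral_indicator_const (1:ℝ) hsmeas, measureReal_def, hprob]
    rw [ENNReal.toReal_ofReal hp.le]
    simp
  have hint1 : Integrable (fun ω => z ω / p - 1) μ :=
    (hint.div_const p).sub (integrable_const 1)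
  have hE1 : ∫ ω, (z ω / p - 1) ∂μ = 0 := by
    rw [integral_sub (hint.div_const p) (integrable_const 1), integral_div, hEz,
      integral_const]
    simp [div_self hp.ne']
  have hm2 : ∫ ω, (z ω / p - 1)^2 ∂μ = (1-p)/p := by
    have hpt : ∀ ω, (z ω / p - 1)^2 = (1/p^2 - 2/p) * z ω + 1 := by
      intro ω
      rcases hz ω with h | h <;> rw [h] <;> field_simp <;> ring
    simp only [hpt]
    rw [integral_add (hint.const_mul _) (integrable_const 1), integral_const_mul, hEz,
      integral_const]
    simp only [measure_univ, probReal_univ, ENNReal.toReal_one, smul_eq_mul, one_mul]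
    field_simp
    ring
  have hint2 : Integrable (fun ω => (z ω / p - 1) • v) μ := hint1.smul_const v
  -- Part 1
  have part1 : (∫ ω, ghat ω ∂μ) = g := by
    simp only [hrepr]
    rw [integral_add (integrable_const g) hint2, integral_const,
      integral_smul_const, hE1]
    simp
  -- Part 2
  set K : ℝ := (if h : prog x < T then g ⟨prog x, h⟩ else 0) with hKdef
  have hnormv : ‖v‖^2 = K^2 := by
    rw [hvs, hKdef]
    split
    · rw [EuclideanSpace.norm_single]
      exact sq_abs _
    · simp
  have part2 : (∫ ω, ‖ghat ω - g‖ ^ 2 ∂μ) = K ^ 2 * (1 - p) / p := by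
    have hptw : ∀ ω, ‖ghat ω - g‖ ^ 2 = (z ω / p - 1)^2 * ‖v‖^2 := by
      intro ω
      rw [hrepr, add_sub_cancel_left, norm_smul, mul_pow, Real.norm_eq_abs, sq_abs]
    simp only [hptw]
    rw [integral_mul_const, hm2, hnormv]
    ring
  -- Part 3
  have hKbound : K^2 ≤ 23^2 := by
    rw [hKdef]
    split
    · rename_i h
      by_cases hd : DifferentiableAt ℝ (fhat T) x
      · have hje : ((⟨prog x, h⟩ : Fin T) : ℕ) = prog x := rfl
        obtain ⟨B1, B2, hgj, hB1n, hB1l, hB2n, hB2l⟩ :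
            ∃ B1 B2 : ℝ, g (⟨prog x, h⟩ : Fin T)
              = -((B1+B2) * Real.sqrt (Real.exp 1)) ∧
              0 ≤ B1 ∧ B1 ≤ Real.exp 1 ∧ 0 ≤ B2 ∧ B2 ≤ Real.exp 1 := by
          rcases Nat.eq_zero_or_pos (prog x) with h0 | h0
          · exact ⟨0, Psi 1,
              grad_val x _ (le_of_eq hje.symm) hd (Or.inl ⟨by omega, rfl, rfl⟩),
              le_rfl, (Real.exp_pos 1).le, psi_nonneg 1, psi_le 1⟩
          · exact ⟨Psi (-(coord x (prog x - 1))), Psi (coord x (prog x - 1)),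
              grad_val x _ (le_of_eq hje.symm) hd (Or.inr ⟨by omega, rfl, rfl⟩),
              psi_nonneg _, psi_le _, psi_nonneg _, psi_le _⟩
        rw [hgj]
        have hsq : Real.sqrt (Real.exp 1) ^ 2 = Real.exp 1 :=
          Real.sq_sqrt (Real.exp_pos 1).le
        have he : Real.exp 1 < 2.7182818286 := Real.exp_one_lt_d9
        have he0 : (0:ℝ) < Real.exp 1 := Real.exp_pos 1
        have hc1 : (-((B1+B2) * Real.sqrt (Real.exp 1)))^2
            = (B1+B2)^2 * (Real.sqrt (Real.exp 1))^2 := by ring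
        rw [hc1, hsq]
        nlinarith
      · rw [hgdef, gradient_eq_zero_of_not_differentiableAt hd]
        norm_num
    · norm_num
  have part3 : K ^ 2 * (1 - p) / p ≤ 23 ^ 2 * (1 - p) / p := by
    have h1p : (0:ℝ) ≤ (1-p)/p := div_nonneg (by linarith) hp.le
    calc K ^ 2 * (1 - p) / p = K^2 * ((1-p)/p) := by ring
      _ ≤ 23^2 * ((1-p)/p) := mul_le_mul_of_nonneg_right hKbound h1p
      _ = 23 ^ 2 * (1 - p) / p := by ring
  exact ⟨part1, part2, part3⟩
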